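/- Let p be a prime number, let γ ∈ ℤ_(p), and set s := p·𝔇_p(γ) − γ, an integer in {0,…,p−1}. If v_p(𝔇_p(γ)) = 0, then for every r ∈ {0,1,…,p−1}: v_p((γ)_r) = 0 if r ≤ s, and v_p((γ)_r) = 1 if r > s. -/
import Mathlib


open Finset

noncomputable section

/-- The Pochhammer symbol `(x)_i = x (x+1) ⋯ (x+i-1)`. -/
def poch (x : ℚ) (i : ℕ) : ℚ := (ascPochhammer ℚ i).eval x

/-- `x` belongs to the local ring `ℤ_(p)` (written in lowest form, `p` does not
divide the denominator). -/
def inZp (p : ℕ) (x : ℚ) : Prop := ¬ (p ∣ x.den)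

/-- `x` belongs to the maximal ideal `pℤ_(p)`. -/
def inPZp (p : ℕ) (x : ℚ) : Prop := ¬ (p ∣ x.den) ∧ (p : ℤ) ∣ x.num

/-- `x` is a unit of `ℤ_(p)`, i.e. `v_p(x) = 0`. -/
def unitZp (p : ℕ) (x : ℚ) : Prop := ¬ (p ∣ x.den) ∧ ¬ ((p : ℤ) ∣ x.num)

/-- `x` is not a nonpositive integer. -/
def notNonposInt (x : ℚ) : Prop := ¬ ∃ m : ℤ, m ≤ 0 ∧ x = (m : ℚ)

/-- The hypergeometric coefficient `Q_{α,β}(i)`. -/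
def Qcoef {n : ℕ} (α β : Fin n → ℚ) (i : ℕ) : ℚ :=
  (∏ s, poch (α s) i) / (∏ s, poch (β s) i)

/-- The generalized hypergeometric series `ₙF_{n-1}(α,β;z)`. -/
def hgF {n : ℕ} (α β : Fin n → ℚ) : PowerSeries ℚ :=
  PowerSeries.mk fun i => Qcoef α β i

/-- `d_{α,β}`: the lcm of the denominators of the parameters. -/
def dab {n : ℕ} (α β : Fin n → ℚ) : ℕ :=
  Nat.lcm (Finset.univ.lcm fun i => (α i).den) (Finset.univ.lcm fun i => (β i).den)

/-- Dwork's map `𝔇_p`: the unique rational with `p · 𝔇_p x - x ∈ {0, …, p-1}`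
(for `x ∈ ℤ_(p)` and `p` prime). -/
def Dp (p : ℕ) (x : ℚ) : ℚ :=
  (x + ((ZMod.val (-(x.num : ZMod p) * ((x.den : ℕ) : ZMod p)⁻¹) : ℕ) : ℚ)) / p

/-- Componentwise iterate of Dwork's map. -/
def DIter (p a : ℕ) {n : ℕ} (γ : Fin n → ℚ) : Fin n → ℚ := fun i => (Dp p)^[a] (γ i)

open scoped Classical in
/-- The set `E_{γ,δ,p}` of residues of the exponents at zero (it only depends on `δ`,
whose last entry is `1`). -/
def Eset (p : ℕ) {n : ℕ} (δ : Fin n → ℚ) : Finset ℕ :=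
  (Finset.range p).filter fun r => ∃ j, inPZp p ((r : ℚ) - (1 - δ j))

open scoped Classical in
/-- The set `S_{γ,δ,p}`. -/
def Sset (p : ℕ) {n : ℕ} (γ δ : Fin n → ℚ) : Finset ℕ :=
  (Eset p δ).filter fun r => unitZp p (Qcoef γ δ r)

open scoped Classical in
/-- The set `P_{γ,r}`. -/
def Pset (p : ℕ) {n : ℕ} (γ : Fin n → ℚ) (r : ℕ) : Finset (Fin n) :=
  Finset.univ.filter fun s => inPZp p (poch (γ s) r)

open scoped Classical in
/-- The set `C_{γ,r}`. -/
def Cset (p : ℕ) {n : ℕ} (γ : Fin n → ℚ) (r : ℕ) : Finset (Fin n) :=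
  Finset.univ.filter fun s => ¬ inPZp p (poch (γ s) r)

/-- The `P_{p,l}` property of the couple `(α,β)`. -/
def Pprop (p l : ℕ) {n : ℕ} (α β : Fin n → ℚ) : Prop :=
  (∀ i, inZp p (α i)) ∧ (∀ i, inZp p (β i)) ∧
  ∀ k, 1 ≤ k → k ≤ l →
    ((∀ i, unitZp p ((Dp p)^[k] (α i))) ∧ (∀ i, unitZp p ((Dp p)^[k] (β i)))) ∧
    (∀ i j, unitZp p ((Dp p)^[k] (α i) - (Dp p)^[k] (β j))) ∧
    (∀ j s, unitZp p ((Dp p)^[k] (β j) - (Dp p)^[k] (β s)) ↔ β j ≠ β s) ∧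
    (∀ j, β j ≠ 1 → (p : ℚ) * (Dp p)^[k] (β j) - (Dp p)^[k-1] (β j) ≠ (p : ℚ) - 1) ∧
    (∀ i j, unitZp p (1 - (Dp p)^[k] (β j) + (Dp p)^[k] (α i)) ∧
            unitZp p (1 - (Dp p)^[k] (β j) + (Dp p)^[k] (β i)))

/-- The smallest element of `E_{·,δ,p} ∪ {p}` that is greater than `r`
(so if `r = e_{j-1}` in the increasing enumeration of `E`, this is `e_j`). -/
def nextE (p : ℕ) {n : ℕ} (δ : Fin n → ℚ) (r : ℕ) : ℕ :=
  sInf {e : ℕ | (e ∈ Eset p δ ∨ e = p) ∧ r < e}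

/-- A power series over `ℚ`, viewed as a formal Laurent series. -/
def toLS (f : PowerSeries ℚ) : LaurentSeries ℚ := HahnSeries.ofPowerSeries ℤ ℚ f

/-- A polynomial over `ℚ`, viewed as a formal Laurent series. -/
def polyToLS (q : Polynomial ℚ) : LaurentSeries ℚ := toLS (q : PowerSeries ℚ)

/-- `Q ∈ ℤ_(p)(z)`: the Laurent series `Q` is a ratio of polynomials with
coefficients in `ℤ_(p)`. -/
def ratOverZp (p : ℕ) (Q : LaurentSeries ℚ) : Prop :=
  ∃ A B : Polynomial ℚ, B ≠ 0 ∧ (∀ k, inZp p (A.coeff k)) ∧ (∀ k, inZp p (B.coeff k)) ∧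
    Q * polyToLS B = polyToLS A

/-- `Q ∈ ℤ_(p)[[z]][z⁻¹]`: all coefficients of the Laurent series `Q` lie in `ℤ_(p)`. -/
def laurentZp (p : ℕ) (Q : LaurentSeries ℚ) : Prop := ∀ k : ℤ, inZp p (Q.coeff k)

/-- The reduction of `Q` modulo `p` is a rational function over `𝔽_p` of height `< H`:
equivalently, `Q ≡ A/B mod p` with `B ≢ 0 mod p` and both degrees `< H`. -/
def heightModLt (p : ℕ) (Q : LaurentSeries ℚ) (H : ℕ) : Prop :=
  ∃ A B : Polynomial ℚ, (∀ k, inZp p (A.coeff k)) ∧ (∀ k, inZp p (B.coeff k)) ∧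
    (∃ k, ¬ inPZp p (B.coeff k)) ∧ A.natDegree < H ∧ B.natDegree < H ∧
    ∀ k : ℤ, inPZp p ((Q * polyToLS B - polyToLS A).coeff k)

lemma unitZp_val {p : ℕ} [hp : Fact p.Prime] {x : ℚ} (h : unitZp p x) :
    x ≠ 0 ∧ padicValRat p x = 0 := by
  obtain ⟨hd, hn⟩ := h
  have hx : x ≠ 0 := by rintro rfl; exact hn (dvd_zero _)
  refine ⟨hx, ?_⟩
  simp [padicValRat, padicValInt.eq_zero_of_not_dvd hn, padicValNat.eq_zero_of_not_dvd hd]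


/-- With `s := p 𝔇_p(γ) - γ ∈ {0,…,p-1}`, if `v_p(𝔇_p(γ)) = 0` then for
`r ∈ {0,…,p-1}`, `v_p((γ)_r) = 0` if `r ≤ s` and `v_p((γ)_r) = 1` if `r > s`. -/
theorem padicVal_pochhammer (p : ℕ) (hp : Nat.Prime p) (γ : ℚ) (hγ : inZp p γ)
    (hD : unitZp p (Dp p γ)) :
    ∀ r : ℕ, r < p →
      (((r : ℚ) ≤ (p : ℚ) * Dp p γ - γ → poch γ r ≠ 0 ∧ padicValRat p (poch γ r) = 0) ∧
        ((p : ℚ) * Dp p γ - γ < (r : ℚ) → poch γ r ≠ 0 ∧ padicValRat p (poch γ r) = 1)) := by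

  haveI : Fact p.Prime := ⟨hp⟩
  haveI : NeZero p := ⟨hp.pos.ne'⟩
  set s : ℕ := ZMod.val (-(γ.num : ZMod p) * ((γ.den : ℕ) : ZMod p)⁻¹) with hs_def
  have hslt : s < p := ZMod.val_lt _
  have hpQ : (p : ℚ) ≠ 0 := by exact_mod_cast hp.pos.ne'
  have hs : (p : ℚ) * Dp p γ = γ + s := by
    rw [Dp, mul_div_cancel₀ _ hpQ]
  obtain ⟨hDne, hD0⟩ := unitZp_val (p := p) hD
  have hpDne : (p : ℚ) * Dp p γ ≠ 0 := mul_ne_zero hpQ hDne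
  have hvpD : padicValRat p ((p : ℚ) * Dp p γ) = 1 := by
    rw [padicValRat.mul hpQ hDne, hD0, padicValRat.self hp.one_lt]; ring
  -- factor valuations
  have factor : ∀ i : ℕ, i < p →
      (γ + i ≠ 0 ∧ padicValRat p (γ + i) = if i = s then 1 else 0) := by
    intro i hi
    by_cases his : i = s
    · subst his
      rw [if_pos rfl, ← hs]
      exact ⟨hpDne, hvpD⟩
    · rw [if_neg his]
      have key : γ + (i : ℚ) = (((i : ℤ) - (s : ℤ) : ℤ) : ℚ) + (p : ℚ) * Dp p γ := by
        rw [hs]; push_cast; ring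
      have ha : (((i : ℤ) - (s : ℤ) : ℤ) : ℚ) ≠ 0 := by
        simp only [ne_eq, Int.cast_eq_zero, sub_eq_zero]
        exact_mod_cast (fun h => his (by exact_mod_cast h))
      have hndvd : ¬ ((p : ℤ) ∣ ((i : ℤ) - (s : ℤ))) := by
        intro hdvd
        have h0 : (i : ℤ) - (s : ℤ) = 0 := by
          refine Int.eq_zero_of_abs_lt_dvd hdvd ?_
          rw [abs_lt]; omega
        exact (by exact_mod_cast ha : ((i:ℤ) - s) ≠ 0) h0
      have hva : padicValRat p ((((i : ℤ) - (s : ℤ) : ℤ) : ℚ)) = 0 := by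
        rw [padicValRat.of_int, padicValInt.eq_zero_of_not_dvd hndvd]; simp
      have hsum_ne : (((i : ℤ) - (s : ℤ) : ℤ) : ℚ) + (p : ℚ) * Dp p γ ≠ 0 := by
        intro h
        have hEq : (p : ℚ) * Dp p γ = -((((i : ℤ) - (s : ℤ) : ℤ) : ℚ)) := by linarith
        rw [hEq, padicValRat.neg, hva] at hvpD
        exact one_ne_zero hvpD.symm
      constructor
      · rw [key]; exact hsum_ne
      · rw [key, padicValRat.add_eq_of_lt hsum_ne ha hpDne (by rw [hva, hvpD]; norm_num), hva]
  -- main induction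
  have main : ∀ r : ℕ, r ≤ p →
      poch γ r ≠ 0 ∧ padicValRat p (poch γ r) = if s < r then 1 else 0 := by
    intro r
    induction r with
    | zero => intro _; simp [poch]
    | succ n ih =>
      intro h
      obtain ⟨hne, hval⟩ := ih (Nat.le_of_succ_le h)
      have hnp : n < p := h
      obtain ⟨hfne, hfval⟩ := factor n hnp
      have hpoch : poch γ (n + 1) = poch γ n * (γ + n) := by
        simp [poch, ascPochhammer_succ_eval]
      refine ⟨by rw [hpoch]; exact mul_ne_zero hne hfne, ?_⟩
      rw [hpoch, padicValRat.mul hne hfne, hval, hfval]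
      split_ifs <;> omega
  intro r hr
  have hsval : (p : ℚ) * Dp p γ - γ = (s : ℚ) := by rw [hs]; ring
  rw [hsval]
  constructor
  · intro hle
    have hrs : r ≤ s := by exact_mod_cast hle
    obtain ⟨hne, hval⟩ := main r hr.le
    exact ⟨hne, by rwa [if_neg (by omega)] at hval⟩
  · intro hlt
    have hrs : s < r := by exact_mod_cast hlt
    obtain ⟨hne, hval⟩ := main r hr.le
    exact ⟨hne, by rwa [if_pos hrs] at hval⟩
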